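/- arXiv:2505.09710 — 8 statements merged into one kernel-verified Lean document; each statement's English description precedes it below -/
import Mathlib

section
/- Any function y : ℝ^d → ℝ computed by a network composed solely of max-plus and min-plus morphological perceptron units is Lipschitz continuous on ℝ^d, and for almost every x ∈ ℝ^d, the gradient ∇y(x) is either the zero vector or a standard basis vector e_i for some index i (possibly depending on x). -/
open MeasureTheory

/-- A layered network composed solely of max-plus and min-plus morphological perceptron
units. Each unit of a layer is either a max-plus unit `x ↦ max(w₀, max_j (x_j + w_j))`
(when `isMax i = true`) or a min-plus unit `x ↦ min(m₀, min_j (x_j + m_j))`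
(when `isMax i = false`); `w i none` is the bias of unit `i`. -/
inductive MPNet (d : ℕ) : ℕ → Type where
  | input : MPNet d d
  | layer {m k : ℕ} (prev : MPNet d (m + 1)) (isMax : Fin k → Bool)
      (w : Fin k → Option (Fin (m + 1)) → ℝ) : MPNet d k

/-- The function computed by a morphological network. -/
noncomputable def MPNet.eval {d : ℕ} : {m : ℕ} → MPNet d m → (Fin d → ℝ) → Fin m → ℝ
  | _, .input, x => x
  | _, .layer prev isMax w, x => fun i =>
      if isMax i then
        max (w i none)
          (Finset.univ.sup' Finset.univ_nonempty fun j => prev.eval x j + w i (some j))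
      else
        min (w i none)
          (Finset.univ.inf' Finset.univ_nonempty fun j => prev.eval x j + w i (some j))


section Aux
variable {d : ℕ}

/-- building blocks -/
inductive MPLeaf (d : ℕ) : Type
  | const (c : ℝ) : MPLeaf d
  | coord (i : Fin d) (c : ℝ) : MPLeaf d

noncomputable def MPLeaf.fn : MPLeaf d → (Fin d → ℝ) → ℝ
  | .const c => fun _ => c
  | .coord i c => fun x => x i + c

lemma MPLeaf.continuous_fn (a : MPLeaf d) : Continuous a.fn := by
  cases a with
  | const c => exact continuous_const
  | coord i c => exact (continuous_apply i).add continuous_const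

inductive MPGood (d : ℕ) : ((Fin d → ℝ) → ℝ) → Prop
  | const (c : ℝ) : MPGood d fun _ => c
  | coord (i : Fin d) (c : ℝ) : MPGood d fun x => x i + c
  | max {f g} : MPGood d f → MPGood d g → MPGood d fun x => max (f x) (g x)
  | min {f g} : MPGood d f → MPGood d g → MPGood d fun x => min (f x) (g x)

lemma MPGood.lipschitz {f} (hf : MPGood d f) : LipschitzWith 1 f := by
  induction hf with
  | const c => exact (LipschitzWith.const c).weaken zero_le_one
  | coord i c =>
      refine LipschitzWith.of_dist_le_mul fun x y => ?_
      rw [NNReal.coe_one, one_mul, dist_add_right]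
      exact dist_le_pi_dist x y i
  | max _ _ ih1 ih2 => simpa using ih1.max ih2
  | min _ _ ih1 ih2 => simpa using ih1.min ih2

lemma MPGood.add_const {f} (hf : MPGood d f) (t : ℝ) : MPGood d fun x => f x + t := by
  induction hf with
  | const c => exact MPGood.const (c + t)
  | coord i c => simpa [add_assoc] using MPGood.coord i (c + t)
  | max _ _ ih1 ih2 => simpa [max_add_add_right] using ih1.max ih2
  | min _ _ ih1 ih2 => simpa [min_add_add_right] using ih1.min ih2

lemma MPGood.sup' {ι : Type*} (s : Finset ι) (hs : s.Nonempty) (F : ι → (Fin d → ℝ) → ℝ)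
    (hF : ∀ j ∈ s, MPGood d (F j)) :
    MPGood d fun x => s.sup' hs fun j => F j x := by
  have hrw : (fun x => s.sup' hs fun j => F j x) = s.sup' hs F := by
    funext x; exact (Finset.sup'_apply hs F x).symm
  rw [hrw]
  exact Finset.sup'_induction hs F (fun f1 h1 f2 h2 => h1.max h2) hF

lemma MPGood.inf' {ι : Type*} (s : Finset ι) (hs : s.Nonempty) (F : ι → (Fin d → ℝ) → ℝ)
    (hF : ∀ j ∈ s, MPGood d (F j)) :
    MPGood d fun x => s.inf' hs fun j => F j x := by
  have hrw : (fun x => s.inf' hs fun j => F j x) = s.inf' hs F := by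
    funext x; exact (Finset.inf'_apply hs F x).symm
  rw [hrw]
  exact Finset.inf'_induction hs F (fun f1 h1 f2 h2 => h1.min h2) hF

lemma MPGood.leaves {f} (hf : MPGood d f) :
    ∃ L : List (MPLeaf d), ∀ x : Fin d → ℝ,
      (∀ a ∈ L, ∀ b ∈ L, a ≠ b → a.fn x ≠ b.fn x) →
      ∃ a ∈ L, f =ᶠ[nhds x] a.fn := by
  induction hf with
  | const c =>
      exact ⟨[.const c], fun x _ => ⟨.const c, by simp, by rfl⟩⟩
  | coord i c =>
      exact ⟨[.coord i c], fun x _ => ⟨.coord i c, by simp, by rfl⟩⟩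
  | @max g h _ _ ihg ihh =>
      obtain ⟨Lg, hLg⟩ := ihg
      obtain ⟨Lh, hLh⟩ := ihh
      refine ⟨Lg ++ Lh, fun x hx => ?_⟩
      obtain ⟨a, ha, hga⟩ := hLg x fun a ha b hb hab =>
        hx a (by simp [ha]) b (by simp [hb]) hab
      obtain ⟨b, hb, hhb⟩ := hLh x fun a ha b hb hab =>
        hx a (by simp [ha]) b (by simp [hb]) hab
      by_cases hab : a = b
      · subst hab
        exact ⟨a, by simp [ha], (hga.and hhb).mono fun y hy => by simp [hy.1, hy.2]⟩
      · have hne : a.fn x ≠ b.fn x :=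
          hx a (by simp [ha]) b (by simp [hb]) hab
        rcases hne.lt_or_gt with hlt | hlt
        · have hev : ∀ᶠ y in nhds x, a.fn y < b.fn y :=
            (a.continuous_fn.continuousAt).eventually_lt (b.continuous_fn.continuousAt) hlt
          refine ⟨b, by simp [hb], ((hga.and hhb).and hev).mono fun y hy => ?_⟩
          simp only [hy.1.1, hy.1.2]
          exact max_eq_right hy.2.le
        · have hev : ∀ᶠ y in nhds x, b.fn y < a.fn y :=
            (b.continuous_fn.continuousAt).eventually_lt (a.continuous_fn.continuousAt) hlt
          refine ⟨a, by simp [ha], ((hga.and hhb).and hev).mono fun y hy => ?_⟩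
          simp only [hy.1.1, hy.1.2]
          exact max_eq_left hy.2.le
  | @min g h _ _ ihg ihh =>
      obtain ⟨Lg, hLg⟩ := ihg
      obtain ⟨Lh, hLh⟩ := ihh
      refine ⟨Lg ++ Lh, fun x hx => ?_⟩
      obtain ⟨a, ha, hga⟩ := hLg x fun a ha b hb hab =>
        hx a (by simp [ha]) b (by simp [hb]) hab
      obtain ⟨b, hb, hhb⟩ := hLh x fun a ha b hb hab =>
        hx a (by simp [ha]) b (by simp [hb]) hab
      by_cases hab : a = b
      · subst hab
        exact ⟨a, by simp [ha], (hga.and hhb).mono fun y hy => by simp [hy.1, hy.2]⟩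
      · have hne : a.fn x ≠ b.fn x :=
          hx a (by simp [ha]) b (by simp [hb]) hab
        rcases hne.lt_or_gt with hlt | hlt
        · have hev : ∀ᶠ y in nhds x, a.fn y < b.fn y :=
            (a.continuous_fn.continuousAt).eventually_lt (b.continuous_fn.continuousAt) hlt
          refine ⟨a, by simp [ha], ((hga.and hhb).and hev).mono fun y hy => ?_⟩
          simp only [hy.1.1, hy.1.2]
          exact min_eq_left hy.2.le
        · have hev : ∀ᶠ y in nhds x, b.fn y < a.fn y :=
            (b.continuous_fn.continuousAt).eventually_lt (a.continuous_fn.continuousAt) hlt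
          refine ⟨b, by simp [hb], ((hga.and hhb).and hev).mono fun y hy => ?_⟩
          simp only [hy.1.1, hy.1.2]
          exact min_eq_right hy.2.le

lemma mp_null_level (L : (Fin d → ℝ) →ₗ[ℝ] ℝ) (hL : L ≠ 0) (t : ℝ) :
    volume {x : Fin d → ℝ | L x = t} = 0 := by
  obtain ⟨v, hv⟩ : ∃ v, L v ≠ 0 := by
    by_contra h
    push_neg at h
    exact hL (LinearMap.ext fun v => by simp [h v])
  set x₀ : Fin d → ℝ := (t / L v) • v with hx₀def
  have hx₀ : L x₀ = t := by
    rw [hx₀def, L.map_smul, smul_eq_mul, div_mul_cancel₀ t hv]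
  have hpre : (fun y => x₀ + y) ⁻¹' {x : Fin d → ℝ | L x = t}
      = (LinearMap.ker L : Set (Fin d → ℝ)) := by
    ext y
    simp [Set.mem_preimage, map_add, hx₀, LinearMap.mem_ker]
  calc volume {x : Fin d → ℝ | L x = t}
      = volume ((fun y => x₀ + y) ⁻¹' {x : Fin d → ℝ | L x = t}) :=
        (measure_preimage_add volume x₀ _).symm
    _ = volume (LinearMap.ker L : Set (Fin d → ℝ)) := by rw [hpre]
    _ = 0 := Measure.addHaar_submodule volume _ (by
        intro h
        exact hv (LinearMap.mem_ker.mp (h ▸ Submodule.mem_top)))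

lemma mp_leaf_null (a b : MPLeaf d) (hab : a ≠ b) :
    volume {x : Fin d → ℝ | a.fn x = b.fn x} = 0 := by
  cases a with
  | const c =>
    cases b with
    | const c' =>
        have hcc : c ≠ c' := fun h => hab (by rw [h])
        convert measure_empty (μ := volume)
        ext x; simp [MPLeaf.fn, hcc]
    | coord j c' =>
        refine measure_mono_null ?_
          (mp_null_level (LinearMap.proj (R := ℝ) (φ := fun _ : Fin d => ℝ) j) (fun h => by
            have := DFunLike.congr_fun h (Pi.single j 1)
            simp at this) (c - c'))
        intro x hx
        simp only [Set.mem_setOf_eq, MPLeaf.fn] at hx ⊢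
        simp only [LinearMap.proj_apply]
        linarith
  | coord i c =>
    cases b with
    | const c' =>
        refine measure_mono_null ?_
          (mp_null_level (LinearMap.proj (R := ℝ) (φ := fun _ : Fin d => ℝ) i) (fun h => by
            have := DFunLike.congr_fun h (Pi.single i 1)
            simp at this) (c' - c))
        intro x hx
        simp only [Set.mem_setOf_eq, MPLeaf.fn] at hx ⊢
        simp only [LinearMap.proj_apply]
        linarith
    | coord j c' =>
        by_cases hij : i = j
        · subst hij
          have hcc : c ≠ c' := fun h => hab (by rw [h])
          convert measure_empty (μ := volume)
          ext x; simp [MPLeaf.fn, hcc]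
        · refine measure_mono_null ?_
            (mp_null_level (LinearMap.proj (R := ℝ) (φ := fun _ : Fin d => ℝ) i
              - LinearMap.proj (R := ℝ) (φ := fun _ : Fin d => ℝ) j) (fun h => by
                have := DFunLike.congr_fun h (Pi.single i 1)
                have hji : j ≠ i := Ne.symm hij
                simp [Pi.single_apply, hji] at this) (c' - c))
          intro x hx
          simp only [Set.mem_setOf_eq, MPLeaf.fn] at hx ⊢
          simp only [LinearMap.sub_apply, LinearMap.proj_apply]
          linarith

lemma mp_ae_list {α : Type*} (L : List α) (P : α → (Fin d → ℝ) → Prop)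
    (h : ∀ a ∈ L, ∀ᵐ x ∂volume, P a x) : ∀ᵐ x ∂volume, ∀ a ∈ L, P a x := by
  induction L with
  | nil => filter_upwards with x a ha; exact absurd ha List.not_mem_nil
  | cons c T ih =>
      filter_upwards [h c List.mem_cons_self,
        ih fun a ha => h a (List.mem_cons_of_mem _ ha)] with x h1 h2 a ha
      rcases List.mem_cons.mp ha with rfl | ha
      · exact h1
      · exact h2 a ha

lemma MPGood.ae_deriv {f} (hf : MPGood d f) :
    ∀ᵐ x ∂volume, DifferentiableAt ℝ f x ∧
      (fderiv ℝ f x = 0 ∨ ∃ i : Fin d, ∀ v, fderiv ℝ f x v = v i) := by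
  obtain ⟨L, hL⟩ := hf.leaves
  have key : ∀ᵐ x ∂volume, ∀ a ∈ L, ∀ b ∈ L, a ≠ b → a.fn x ≠ b.fn x := by
    apply mp_ae_list
    intro a _
    apply mp_ae_list
    intro b _
    by_cases hab : a = b
    · filter_upwards with x h; exact absurd hab h
    · have h0 := mp_leaf_null a b hab
      have h1 : ∀ᵐ x ∂(volume : Measure (Fin d → ℝ)), a.fn x ≠ b.fn x :=
        ae_iff.mpr (by simpa [not_not] using h0)
      filter_upwards [h1] with x h _
      exact h
  filter_upwards [key] with x hx
  obtain ⟨a, _, hfa⟩ := hL x hx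
  cases a with
  | const c =>
      have hd : DifferentiableAt ℝ (MPLeaf.fn (d := d) (.const c)) x :=
        differentiableAt_const c
      have hdiff : DifferentiableAt ℝ f x := hfa.differentiableAt_iff.mpr hd
      refine ⟨hdiff, Or.inl ?_⟩
      rw [hfa.fderiv_eq]
      exact fderiv_const_apply c
  | coord i c =>
      have hF : HasFDerivAt (MPLeaf.fn (d := d) (.coord i c))
          (ContinuousLinearMap.proj (R := ℝ) (φ := fun _ : Fin d => ℝ) i) x := by
        have h' := ((ContinuousLinearMap.proj (R := ℝ) (φ := fun _ : Fin d => ℝ)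
          i).hasFDerivAt (x := x)).add_const c
        simpa [MPLeaf.fn] using h'
      have hdiff : DifferentiableAt ℝ f x := hfa.differentiableAt_iff.mpr hF.differentiableAt
      refine ⟨hdiff, Or.inr ⟨i, fun v => ?_⟩⟩
      rw [hfa.fderiv_eq, hF.fderiv]
      rfl

lemma MPGood_eval {m : ℕ} (net : MPNet d m) : ∀ i : Fin m,
    MPGood d fun x => net.eval x i := by
  induction net with
  | input => intro i; simpa [MPNet.eval] using MPGood.coord i 0
  | @layer m k prev isMax w ih =>
      intro i
      cases h : isMax i with
      | true =>
          have : (fun x => (MPNet.layer prev isMax w).eval x i)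
              = fun x => max (w i none)
                (Finset.univ.sup' Finset.univ_nonempty fun j => prev.eval x j + w i (some j)) := by
            funext x; simp [MPNet.eval, h]
          rw [this]
          exact (MPGood.const (w i none)).max
            (MPGood.sup' _ _ _ fun j _ => (ih j).add_const _)
      | false =>
          have : (fun x => (MPNet.layer prev isMax w).eval x i)
              = fun x => min (w i none)
                (Finset.univ.inf' Finset.univ_nonempty fun j => prev.eval x j + w i (some j)) := by
            funext x; simp [MPNet.eval, h]
          rw [this]
          exact (MPGood.const (w i none)).min
            (MPGood.inf' _ _ _ fun j _ => (ih j).add_const _)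

end Aux

/-- Any single-output function computed by a network of max-plus and min-plus morphological
perceptrons is Lipschitz on `ℝ^d`, and almost everywhere its gradient is either `0` or a
standard basis vector `e_i`. -/
theorem mpnet_lipschitz_grad_zero_or_basis (d : ℕ) (net : MPNet d 1) :
    (∃ K : NNReal, LipschitzWith K fun x => net.eval x 0) ∧
      ∀ᵐ x ∂volume, DifferentiableAt ℝ (fun x => net.eval x 0) x ∧
        (fderiv ℝ (fun x => net.eval x 0) x = 0 ∨
          ∃ i : Fin d, ∀ v, fderiv ℝ (fun x => net.eval x 0) x v = v i) := by
  have hg := MPGood_eval net 0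
  exact ⟨⟨1, hg.lipschitz⟩, hg.ae_deriv⟩
end

section
/- Networks composed solely of max-plus and min-plus morphological perceptrons are not universal approximators on ℝ^d: for any compact convex B ⊆ ℝ^d with nonempty interior, the class of functions computed by such networks restricted to B is not dense in C(B) under the sup-norm. -/
lemma abs_sup'_sub_sup'_le' {α : Type*} (s : Finset α) (hs : s.Nonempty)
    (f g : α → ℝ) (C : ℝ) (h : ∀ j ∈ s, |f j - g j| ≤ C) :
    |s.sup' hs f - s.sup' hs g| ≤ C := by
  rw [abs_sub_le_iff]
  constructor
  · rw [sub_le_iff_le_add]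
    apply Finset.sup'_le
    intro j hj
    have h1 : f j - g j ≤ C := (le_abs_self _).trans (h j hj)
    have h2 := Finset.le_sup' g hj
    linarith
  · rw [sub_le_iff_le_add]
    apply Finset.sup'_le
    intro j hj
    have h1 : g j - f j ≤ C := by
      have := h j hj; rw [abs_sub_le_iff] at this; exact this.2
    have h2 := Finset.le_sup' f hj
    linarith

lemma abs_inf'_sub_inf'_le' {α : Type*} (s : Finset α) (hs : s.Nonempty)
    (f g : α → ℝ) (C : ℝ) (h : ∀ j ∈ s, |f j - g j| ≤ C) :
    |s.inf' hs f - s.inf' hs g| ≤ C := by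
  rw [abs_sub_le_iff]
  constructor
  · rw [sub_le_iff_le_add, ← sub_le_iff_le_add']
    apply Finset.le_inf'
    intro j hj
    have h1 : f j - g j ≤ C := (le_abs_self _).trans (h j hj)
    have h2 := Finset.inf'_le f hj
    linarith
  · rw [sub_le_iff_le_add, ← sub_le_iff_le_add']
    apply Finset.le_inf'
    intro j hj
    have h1 : g j - f j ≤ C := by
      have := h j hj; rw [abs_sub_le_iff] at this; exact this.2
    have h2 := Finset.inf'_le g hj
    linarith

lemma MPNet.eval_lip {d : ℕ} : ∀ {m : ℕ} (net : MPNet d m) (x y : Fin d → ℝ) (i : Fin m),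
    |net.eval x i - net.eval y i| ≤ dist x y
  | _, .input, x, y, i => by
      have := dist_le_pi_dist x y i
      rwa [Real.dist_eq] at this
  | _, .layer prev isMax w, x, y, i => by
      have key : ∀ j ∈ (Finset.univ : Finset (Fin _)),
          |(prev.eval x j + w i (some j)) - (prev.eval y j + w i (some j))| ≤ dist x y := by
        intro j _
        have := MPNet.eval_lip prev x y j
        simpa using this
      simp only [MPNet.eval]
      by_cases h : isMax i = true
      · rw [if_pos h, if_pos h]
        have := abs_max_sub_max_le_max (w i none)
          (Finset.univ.sup' Finset.univ_nonempty fun j => prev.eval x j + w i (some j))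
          (w i none)
          (Finset.univ.sup' Finset.univ_nonempty fun j => prev.eval y j + w i (some j))
        refine this.trans ?_
        simp only [sub_self, abs_zero]
        rw [max_le_iff]
        exact ⟨dist_nonneg, abs_sup'_sub_sup'_le' _ _ _ _ _ key⟩
      · rw [if_neg h, if_neg h]
        have := abs_min_sub_min_le_max (w i none)
          (Finset.univ.inf' Finset.univ_nonempty fun j => prev.eval x j + w i (some j))
          (w i none)
          (Finset.univ.inf' Finset.univ_nonempty fun j => prev.eval y j + w i (some j))
        refine this.trans ?_
        simp only [sub_self, abs_zero]
        rw [max_le_iff]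
        exact ⟨dist_nonneg, abs_inf'_sub_inf'_le' _ _ _ _ _ key⟩

lemma MPNet.no_zero : ∀ {m : ℕ}, MPNet 0 (m + 1) → False
  | _, .layer prev _ _ => MPNet.no_zero prev

/-- Networks composed solely of max-plus and min-plus morphological perceptrons are not
universal approximators: on any compact convex `B ⊆ ℝ^d` with nonempty interior, the class
of functions they compute is not dense in `C(B)` for the sup-norm. -/
theorem mpnet_not_universal (d : ℕ) (B : Set (Fin d → ℝ))
    (hBc : IsCompact B) (hBconv : Convex ℝ B) (hBint : (interior B).Nonempty) :
    ∃ g : (Fin d → ℝ) → ℝ, ContinuousOn g B ∧ ∃ ε > (0 : ℝ),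
      ∀ net : MPNet d 1, ∃ x ∈ B, ε ≤ |net.eval x 0 - g x| := by
  rcases Nat.eq_zero_or_pos d with hd | hd
  · subst hd
    exact ⟨0, continuousOn_const, 1, one_pos, fun net => (MPNet.no_zero net).elim⟩
  · obtain ⟨a, ha⟩ := hBint
    obtain ⟨r, hr, hball⟩ := Metric.isOpen_iff.mp isOpen_interior a ha
    set i0 : Fin d := ⟨0, hd⟩
    set b : Fin d → ℝ := fun j => if j = i0 then a i0 + r / 2 else a j with hb
    have hdba : dist b a ≤ r / 2 := by
      rw [dist_pi_le_iff (by linarith)]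
      intro j
      by_cases hj : j = i0
      · subst hj
        simp only [hb, if_pos rfl, Real.dist_eq, add_sub_cancel_left]
        rw [abs_of_nonneg (by linarith)]
      · simp only [hb, if_neg hj, Real.dist_eq, sub_self, abs_zero]
        linarith
    have haB : a ∈ B := interior_subset ha
    have hbB : b ∈ B := by
      apply interior_subset (hball ?_)
      rw [Metric.mem_ball]
      linarith
    refine ⟨fun x => 2 * x i0, (continuous_const.mul (continuous_apply i0)).continuousOn,
      r / 4, by linarith, fun net => ?_⟩
    have hlip : |net.eval b 0 - net.eval a 0| ≤ r / 2 :=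
      (MPNet.eval_lip net b a 0).trans hdba
    have hgb : (2 : ℝ) * b i0 - 2 * a i0 = r := by
      simp [hb]
      ring
    by_cases hcase : r / 4 ≤ |net.eval a 0 - 2 * a i0|
    · exact ⟨a, haB, hcase⟩
    · refine ⟨b, hbB, ?_⟩
      push_neg at hcase
      have h1 := neg_le_abs (net.eval b 0 - 2 * b i0)
      have h2 := le_abs_self (net.eval a 0 - 2 * a i0)
      have h3 := neg_le_abs (net.eval a 0 - 2 * a i0)
      have h4 := le_abs_self (net.eval b 0 - net.eval a 0)
      have h5 := neg_le_abs (net.eval b 0 - net.eval a 0)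
      linarith
end

section
/- Any function y : ℝ^d → ℝ computed by a non-activated DEP-based network (layers x_i^{(n)} = λ_i^{(n)} · max_j (x_j^{(n-1)} + w_{ij}^{(n)}) + (1-λ_i^{(n)}) · min_j (x_j^{(n-1)} + m_{ij}^{(n)}) with λ_i^{(n)} ∈ [0,1]) is Lipschitz continuous, and almost everywhere its gradient satisfies ∇y(x) ⪰ 0 (componentwise nonnegative) and ‖∇y(x)‖₁ = 1. -/
open MeasureTheory

/-- A non-activated DEP-based network: each unit of a layer computes
`λ_i · max_j (x_j + w_{ij}) + (1 - λ_i) · min_j (x_j + m_{ij})` with `λ_i ∈ [0, 1]`. -/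
inductive DEPNet (d : ℕ) : ℕ → Type where
  | input : DEPNet d d
  | layer {m k : ℕ} (prev : DEPNet d (m + 1)) (lam : Fin k → ℝ)
      (hlam : ∀ i, 0 ≤ lam i ∧ lam i ≤ 1)
      (w mw : Fin k → Fin (m + 1) → ℝ) : DEPNet d k

/-- The function computed by a DEP-based network. -/
noncomputable def DEPNet.eval {d : ℕ} : {k : ℕ} → DEPNet d k → (Fin d → ℝ) → Fin k → ℝ
  | _, .input, x => x
  | _, .layer prev lam _ w mw, x => fun i =>
      lam i * (Finset.univ.sup' Finset.univ_nonempty fun j => prev.eval x j + w i j) +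
        (1 - lam i) * (Finset.univ.inf' Finset.univ_nonempty fun j => prev.eval x j + mw i j)

theorem DEPNet.eval_mono {d k : ℕ} (net : DEPNet d k) {x y : Fin d → ℝ}
    (h : ∀ i, x i ≤ y i) : ∀ j, net.eval x j ≤ net.eval y j := by
  induction net with
  | input => exact h
  | layer prev lam hlam w mw ih =>
    intro j
    simp only [DEPNet.eval]
    have hs : (Finset.univ.sup' Finset.univ_nonempty fun i => prev.eval x i + w j i) ≤
        (Finset.univ.sup' Finset.univ_nonempty fun i => prev.eval y i + w j i) := by
      apply Finset.sup'_le
      intro i hi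
      exact le_trans (add_le_add (ih i) le_rfl)
        (Finset.le_sup' (fun i => prev.eval y i + w j i) hi)
    have hi' : (Finset.univ.inf' Finset.univ_nonempty fun i => prev.eval x i + mw j i) ≤
        (Finset.univ.inf' Finset.univ_nonempty fun i => prev.eval y i + mw j i) := by
      apply Finset.le_inf'
      intro i hi
      exact le_trans (Finset.inf'_le (fun i => prev.eval x i + mw j i) hi)
        (add_le_add (ih i) le_rfl)
    have h1 := (hlam j).1
    have h2 := (hlam j).2
    have := mul_le_mul_of_nonneg_left hs h1
    have := mul_le_mul_of_nonneg_left hi' (by linarith : (0:ℝ) ≤ 1 - lam j)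
    linarith

theorem DEPNet.inf'_add_aux {ι : Type*} (s : Finset ι) (hs : s.Nonempty) (f : ι → ℝ) (c : ℝ) :
    (s.inf' hs fun i => f i + c) = s.inf' hs f + c := by
  apply le_antisymm
  · obtain ⟨i, hi, hfi⟩ := s.exists_mem_eq_inf' hs f
    exact le_trans (Finset.inf'_le _ hi) (by rw [hfi])
  · apply Finset.le_inf'
    intro i hi
    exact add_le_add (Finset.inf'_le _ hi) le_rfl

theorem DEPNet.eval_add_const {d k : ℕ} (net : DEPNet d k) (x : Fin d → ℝ) (c : ℝ) :
    ∀ j, net.eval (fun i => x i + c) j = net.eval x j + c := by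
  induction net with
  | input => intro j; rfl
  | layer prev lam hlam w mw ih =>
    intro j
    simp only [DEPNet.eval]
    have hs : (Finset.univ.sup' Finset.univ_nonempty
          fun i => prev.eval (fun i => x i + c) i + w j i) =
        (Finset.univ.sup' Finset.univ_nonempty fun i => prev.eval x i + w j i) + c := by
      rw [Finset.sup'_add]
      congr 1
      ext i
      rw [ih]
      ring
    have hi' : (Finset.univ.inf' Finset.univ_nonempty
          fun i => prev.eval (fun i => x i + c) i + mw j i) =
        (Finset.univ.inf' Finset.univ_nonempty fun i => prev.eval x i + mw j i) + c := by
      rw [← DEPNet.inf'_add_aux]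
      congr 1
      ext i
      rw [ih]
      ring
    rw [hs, hi']
    ring

/-- Any single-output function computed by a non-activated DEP-based network is Lipschitz
on `ℝ^d`, and almost everywhere its gradient is componentwise nonnegative with ℓ¹-norm
exactly `1`. -/
theorem depnet_lipschitz_grad_nonneg_l1_eq_one (d : ℕ) (net : DEPNet d 1) :
    (∃ K : NNReal, LipschitzWith K fun x => net.eval x 0) ∧
      ∀ᵐ x ∂volume, DifferentiableAt ℝ (fun x => net.eval x 0) x ∧
        (∀ j, 0 ≤ fderiv ℝ (fun x => net.eval x 0) x (Pi.single j 1)) ∧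
        ∑ j, |fderiv ℝ (fun x => net.eval x 0) x (Pi.single j 1)| = 1 := by
  set f : (Fin d → ℝ) → ℝ := fun x => net.eval x 0 with hf
  -- d = 0 is impossible
  rcases Nat.eq_zero_or_pos d with hd | hd
  · exfalso
    subst hd
    have := net.eval_add_const (fun _ => 0) 1 0
    have h0 : (fun i : Fin 0 => (0:ℝ) + 1) = (fun _ : Fin 0 => (0:ℝ)) := by
      funext i; exact absurd i.2 (by omega)
    rw [h0] at this
    linarith
  -- Lipschitz with constant 1
  have key : ∀ a b : Fin d → ℝ, f a - f b ≤ dist a b := by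
    intro a b
    have h1 : ∀ i, a i ≤ b i + dist a b := by
      intro i
      have h2 : |a i - b i| ≤ dist a b := by
        rw [← Real.dist_eq]; exact dist_le_pi_dist a b i
      linarith [(abs_le.mp h2).2]
    have := net.eval_mono h1 0
    have h3 := net.eval_add_const b (dist a b) 0
    simp only [hf]
    linarith
  have hlip : LipschitzWith 1 f := by
    apply LipschitzWith.of_dist_le_mul
    intro x y
    rw [Real.dist_eq, NNReal.coe_one, one_mul]
    exact abs_le.mpr ⟨by linarith [key y x, dist_comm x y], key x y⟩
  refine ⟨⟨1, hlip⟩, ?_⟩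
  filter_upwards [hlip.ae_differentiableAt] with x hdiff
  have hnn : ∀ j, 0 ≤ fderiv ℝ f x (Pi.single j 1) := by
    intro j
    set L := fderiv ℝ f x with hL
    set v : Fin d → ℝ := Pi.single j 1 with hv
    have hline : HasDerivAt (fun t : ℝ => x + t • v) v 0 := by
      simpa using ((hasDerivAt_id (0:ℝ)).smul_const v).const_add x
    have hF : HasFDerivAt f L (x + (0:ℝ) • v) := by
      simpa using hdiff.hasFDerivAt
    have hg : HasDerivAt (fun t : ℝ => f (x + t • v)) (L v) 0 := by
      exact hF.comp_hasDerivAt (0:ℝ) hline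
    have hmono : Monotone fun t : ℝ => f (x + t • v) := by
      intro s t hst
      apply net.eval_mono
      intro i
      simp only [Pi.add_apply, Pi.smul_apply, smul_eq_mul]
      have hvi : (0:ℝ) ≤ v i := by
        rcases eq_or_ne i j with rfl | hij
        · simp [hv]
        · simp [hv, Pi.single_eq_of_ne hij]
      nlinarith [mul_le_mul_of_nonneg_right hst hvi]
    have hslope := hasDerivAt_iff_tendsto_slope.mp hg
    have hslope' : Filter.Tendsto (slope (fun t : ℝ => f (x + t • v)) 0)
        (nhdsWithin 0 (Set.Ioi 0)) (nhds (L v)) :=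
      hslope.mono_left (nhdsWithin_mono _ (fun t ht => by
        simp only [Set.mem_compl_iff, Set.mem_singleton_iff]
        exact ne_of_gt ht))
    refine ge_of_tendsto hslope' ?_
    filter_upwards [self_mem_nhdsWithin] with t ht
    have ht' : (0:ℝ) < t := ht
    have hle : f (x + (0:ℝ) • v) ≤ f (x + t • v) := by exact hmono ht'.le
    simp only [slope_def_field]
    rw [div_nonneg_iff]
    left
    exact ⟨by simpa using sub_nonneg.mpr hle, by simpa using ht'.le⟩
  refine ⟨hdiff, hnn, ?_⟩
  -- sum of gradient components is 1
  set L := fderiv ℝ f x with hL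
  have hones : (∑ j : Fin d, (Pi.single j 1 : Fin d → ℝ)) = fun _ => (1:ℝ) := by
    funext i
    rw [Finset.sum_apply]
    simp [Pi.single_apply]
  have hsum : ∑ j, L (Pi.single j 1) = L (fun _ => (1:ℝ)) := by
    rw [← hones, map_sum]
  have hone : L (fun _ => (1:ℝ)) = 1 := by
    have hline : HasDerivAt (fun t : ℝ => x + t • (fun _ : Fin d => (1:ℝ)))
        (fun _ : Fin d => (1:ℝ)) 0 := by
      simpa using ((hasDerivAt_id (0:ℝ)).smul_const (fun _ : Fin d => (1:ℝ))).const_add x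
    have hF : HasFDerivAt f L (x + (0:ℝ) • (fun _ : Fin d => (1:ℝ))) := by
      simpa using hdiff.hasFDerivAt
    have hg : HasDerivAt (fun t : ℝ => f (x + t • (fun _ : Fin d => (1:ℝ))))
        (L (fun _ => (1:ℝ))) 0 := by
      exact hF.comp_hasDerivAt (0:ℝ) hline
    have heq : (fun t : ℝ => f (x + t • (fun _ : Fin d => (1:ℝ)))) = fun t => f x + t := by
      funext t
      have hx : (x + t • (fun _ : Fin d => (1:ℝ))) = fun i => x i + t := by
        funext i; simp
      rw [hx]
      exact net.eval_add_const x t 0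
    rw [heq] at hg
    have hg2 : HasDerivAt (fun t : ℝ => f x + t) 1 0 := by
      simpa using (hasDerivAt_id (0:ℝ)).const_add (f x)
    exact hg.unique hg2
  calc ∑ j, |L (Pi.single j 1)| = ∑ j, L (Pi.single j 1) := by
        exact Finset.sum_congr rfl fun j _ => abs_of_nonneg (hnn j)
    _ = 1 := by rw [hsum, hone]
end

section
/- For an activated DEP-based network with L layers of which L̃ layers are activated by a common activation function f satisfying 0 ≤ f' ≤ s ≤ 1 almost everywhere, with input x ∈ ℝ^d and single output y(x), the function y is Lipschitz continuous on ℝ^d and almost everywhere ∇y(x) ⪰ 0 and ‖∇y(x)‖₁ ≤ s^{L̃} ≤ 1. -/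
open MeasureTheory
open Filter Topology

/-- A DEP-based network in which each layer may additionally be activated (flag `act`)
by a common activation function. Each unit computes
`λ_i · max_j (x_j + w_{ij}) + (1 - λ_i) · min_j (x_j + m_{ij})` with `λ_i ∈ [0, 1]`,
optionally followed by the activation. -/
inductive ADEPNet (d : ℕ) : ℕ → Type where
  | input : ADEPNet d d
  | layer {m k : ℕ} (prev : ADEPNet d (m + 1)) (act : Bool) (lam : Fin k → ℝ)
      (hlam : ∀ i, 0 ≤ lam i ∧ lam i ≤ 1)
      (w mw : Fin k → Fin (m + 1) → ℝ) : ADEPNet d k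

/-- The function computed by an activated DEP-based network, with activation `f`. -/
noncomputable def ADEPNet.eval {d : ℕ} (f : ℝ → ℝ) :
    {k : ℕ} → ADEPNet d k → (Fin d → ℝ) → Fin k → ℝ
  | _, .input, x => x
  | _, .layer prev act lam _ w mw, x => fun i =>
      let z :=
        lam i * (Finset.univ.sup' Finset.univ_nonempty fun j => prev.eval f x j + w i j) +
          (1 - lam i) *
            (Finset.univ.inf' Finset.univ_nonempty fun j => prev.eval f x j + mw i j)
      if act then f z else z

/-- The number `L̃` of activated layers of the network. -/
def ADEPNet.countAct {d : ℕ} : {k : ℕ} → ADEPNet d k → ℕ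
  | _, .input => 0
  | _, .layer prev act _ _ _ _ => prev.countAct + (if act then 1 else 0)

lemma lip_ftc_bound (f : ℝ → ℝ) (s : ℝ) (hs0 : 0 ≤ s)
    (hf : LipschitzWith s.toNNReal f)
    (hf' : ∀ᵐ t ∂volume, 0 ≤ deriv f t ∧ deriv f t ≤ s) :
    ∀ a b : ℝ, a ≤ b → 0 ≤ f b - f a ∧ f b - f a ≤ s * (b - a) := by
  have hcont : Continuous f := hf.continuous
  have hlip : ∀ x y : ℝ, |f x - f y| ≤ s * |x - y| := by
    intro x y
    have := hf.dist_le_mul x y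
    simpa [Real.dist_eq, Real.coe_toNNReal s hs0] using this
  intro a b hab
  set h : ℕ → ℝ := fun n => ((n : ℝ) + 1)⁻¹ with hh
  have hpos : ∀ n, 0 < h n := fun n => by positivity
  have hto : Tendsto h atTop (𝓝 0) := tendsto_one_div_add_atTop_nhds_zero_nat.congr
    (fun n => by simp [hh, one_div])
  set F : ℕ → ℝ → ℝ := fun n t => (f (t + h n) - f t) / h n with hF
  -- pointwise convergence at differentiability points
  have hconv : ∀ᵐ t ∂volume, Tendsto (fun n => F n t) atTop (𝓝 (deriv f t)) := by
    filter_upwards [hf.ae_differentiableAt (μ := volume)] with t ht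
    have hd : HasDerivAt f (deriv f t) t := ht.hasDerivAt
    rw [hasDerivAt_iff_tendsto_slope] at hd
    have h1 : Tendsto (fun n => t + h n) atTop (𝓝[≠] t) := by
      apply tendsto_nhdsWithin_of_tendsto_nhds_of_eventually_within
      · simpa using (tendsto_const_nhds.add hto)
      · filter_upwards with n
        simp only [Set.mem_compl_iff, Set.mem_singleton_iff]
        have := (hpos n).ne'
        intro hcontra; apply this; linarith
    have := hd.comp h1
    refine this.congr fun n => ?_
    simp [slope, hF, vsub_eq_sub, inv_mul_eq_div]
  have hbound : ∀ n, ∀ᵐ t ∂(volume.restrict (Set.Ioc a b)), ‖F n t‖ ≤ s := by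
    intro n
    filter_upwards with t
    rw [hF]
    rw [Real.norm_eq_abs, abs_div, abs_of_pos (hpos n), div_le_iff₀ (hpos n)]
    calc |f (t + h n) - f t| ≤ s * |t + h n - t| := hlip _ _
      _ = s * h n := by rw [show t + h n - t = h n by ring, abs_of_pos (hpos n)]
  have hmeasF : ∀ n, AEStronglyMeasurable (F n) (volume.restrict (Set.Ioc a b)) := by
    intro n
    exact (((hcont.comp (continuous_add_right (h n))).sub hcont).div_const _).aestronglyMeasurable
  have hint_bound : Integrable (fun _ : ℝ => s) (volume.restrict (Set.Ioc a b)) := by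
    rw [← MeasureTheory.IntegrableOn]
    exact integrableOn_const measure_Ioc_lt_top.ne
  have hDCT : Tendsto (fun n => ∫ t in Set.Ioc a b, F n t ∂volume) atTop
      (𝓝 (∫ t in Set.Ioc a b, deriv f t ∂volume)) :=
    MeasureTheory.tendsto_integral_of_dominated_convergence _ hmeasF hint_bound hbound
      (ae_restrict_of_ae hconv)
  -- the integrals compute to a difference of averages
  have hI : ∀ n, ∫ t in Set.Ioc a b, F n t ∂volume =
      (∫ t in b..(b + h n), f t) / h n - (∫ t in a..(a + h n), f t) / h n := by
    intro n
    rw [← intervalIntegral.integral_of_le hab]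
    have h1 : ∫ t in a..b, F n t = (∫ t in a..b, (f (t + h n) - f t)) / h n := by
      rw [← intervalIntegral.integral_div]
    have int1 : IntervalIntegrable (fun t => f (t + h n)) volume a b :=
      (hcont.comp (continuous_add_right (h n))).intervalIntegrable _ _
    have h2 : ∫ t in a..b, (f (t + h n) - f t) =
        (∫ t in (a + h n)..(b + h n), f t) - ∫ t in a..b, f t := by
      rw [intervalIntegral.integral_sub int1 (hcont.intervalIntegrable _ _),
        intervalIntegral.integral_comp_add_right]
    have h3 : (∫ t in (a + h n)..(b + h n), f t) - ∫ t in a..b, f t =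
        (∫ t in b..(b + h n), f t) - ∫ t in a..(a + h n), f t := by
      have e1 : (∫ t in a..(a + h n), f t) + ∫ t in (a + h n)..(b + h n), f t
          = ∫ t in a..(b + h n), f t :=
        intervalIntegral.integral_add_adjacent_intervals (hcont.intervalIntegrable _ _)
          (hcont.intervalIntegrable _ _)
      have e2 : (∫ t in a..b, f t) + ∫ t in b..(b + h n), f t = ∫ t in a..(b + h n), f t :=
        intervalIntegral.integral_add_adjacent_intervals (hcont.intervalIntegrable _ _)
          (hcont.intervalIntegrable _ _)
      linarith
    rw [h1, h2, h3, sub_div]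
  -- limit of the averages
  have havg : ∀ c : ℝ, Tendsto (fun n => (∫ t in c..(c + h n), f t) / h n) atTop (𝓝 (f c)) := by
    intro c
    have hG : HasDerivAt (fun u => ∫ t in c..u, f t) (f c) c :=
      intervalIntegral.integral_hasDerivAt_right (hcont.intervalIntegrable _ _)
        (hcont.stronglyMeasurableAtFilter _ _) hcont.continuousAt
    rw [hasDerivAt_iff_tendsto_slope] at hG
    have h1 : Tendsto (fun n => c + h n) atTop (𝓝[≠] c) := by
      apply tendsto_nhdsWithin_of_tendsto_nhds_of_eventually_within
      · simpa using (tendsto_const_nhds.add hto)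
      · filter_upwards with n
        simp only [Set.mem_compl_iff, Set.mem_singleton_iff]
        have := (hpos n).ne'
        intro hcontra; apply this; linarith
    have := hG.comp h1
    refine this.congr fun n => ?_
    simp [slope, inv_mul_eq_div]
  have hlim2 : Tendsto (fun n => ∫ t in Set.Ioc a b, F n t ∂volume) atTop (𝓝 (f b - f a)) := by
    simp only [hI]
    exact (havg b).sub (havg a)
  have heq : f b - f a = ∫ t in Set.Ioc a b, deriv f t ∂volume :=
    tendsto_nhds_unique hlim2 hDCT
  -- bound the integral of the derivative
  have hderiv_int : Integrable (deriv f) (volume.restrict (Set.Ioc a b)) := by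
    refine hint_bound.mono' ((measurable_deriv f).aestronglyMeasurable) ?_
    filter_upwards [ae_restrict_of_ae hf'] with t ht
    rw [Real.norm_eq_abs, abs_le]; constructor <;> linarith [ht.1, ht.2]
  constructor
  · rw [heq]
    refine integral_nonneg_of_ae ?_
    filter_upwards [ae_restrict_of_ae hf'] with t ht using ht.1
  · rw [heq]
    calc ∫ t in Set.Ioc a b, deriv f t ∂volume ≤ ∫ _t in Set.Ioc a b, s ∂volume := by
          refine integral_mono_ae hderiv_int hint_bound ?_
          filter_upwards [ae_restrict_of_ae hf'] with t ht using ht.2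
      _ = s * (b - a) := by
          rw [MeasureTheory.setIntegral_const, smul_eq_mul, Real.volume_real_Ioc_of_le hab,
            mul_comm]

lemma adep_key (d : ℕ) (f : ℝ → ℝ) (s : ℝ) (hs0 : 0 ≤ s)
    (hfm : ∀ a b : ℝ, a ≤ b → 0 ≤ f b - f a ∧ f b - f a ≤ s * (b - a))
    {k : ℕ} (net : ADEPNet d k) :
    ∀ (i : Fin k) (x y : Fin d → ℝ) (M : ℝ), 0 ≤ M →
      (∀ j, x j ≤ y j) → (∀ j, y j ≤ x j + M) →
      net.eval f x i ≤ net.eval f y i ∧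
        net.eval f y i ≤ net.eval f x i + s ^ net.countAct * M := by
  induction net with
  | input =>
    intro i x y M hM hxy hyx
    simp only [ADEPNet.eval, ADEPNet.countAct, pow_zero, one_mul]
    exact ⟨hxy i, hyx i⟩
  | layer prev act lam hlam w mw ih =>
    intro i x y M hM hxy hyx
    set c := prev.countAct with hc
    have hsc : 0 ≤ s ^ c := pow_nonneg hs0 c
    have hA1 : (Finset.univ.sup' Finset.univ_nonempty fun j => prev.eval f x j + w i j) ≤
        Finset.univ.sup' Finset.univ_nonempty fun j => prev.eval f y j + w i j :=
      Finset.sup'_mono_fun fun j _ => by linarith [(ih j x y M hM hxy hyx).1]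
    have hA2 : (Finset.univ.sup' Finset.univ_nonempty fun j => prev.eval f y j + w i j) ≤
        (Finset.univ.sup' Finset.univ_nonempty fun j => prev.eval f x j + w i j) + s ^ c * M := by
      refine Finset.sup'_le _ _ fun j _ => ?_
      have h1 := (ih j x y M hM hxy hyx).2
      have h2 := Finset.le_sup' (fun j => prev.eval f x j + w i j) (Finset.mem_univ j)
      linarith
    have hB1 : (Finset.univ.inf' Finset.univ_nonempty fun j => prev.eval f x j + mw i j) ≤
        Finset.univ.inf' Finset.univ_nonempty fun j => prev.eval f y j + mw i j := by
      refine Finset.le_inf' _ _ fun j _ => ?_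
      have h1 := (ih j x y M hM hxy hyx).1
      have h2 := Finset.inf'_le (fun j => prev.eval f x j + mw i j) (Finset.mem_univ j)
      linarith
    have hB2 : (Finset.univ.inf' Finset.univ_nonempty fun j => prev.eval f y j + mw i j) ≤
        (Finset.univ.inf' Finset.univ_nonempty fun j => prev.eval f x j + mw i j) + s ^ c * M := by
      obtain ⟨j, -, hj⟩ := Finset.exists_mem_eq_inf' (Finset.univ_nonempty)
        (fun j => prev.eval f x j + mw i j)
      have h1 := (ih j x y M hM hxy hyx).2
      have h2 := Finset.inf'_le (fun j => prev.eval f y j + mw i j) (Finset.mem_univ j)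
      rw [hj]
      linarith
    have hl0 := (hlam i).1
    have hl1 := (hlam i).2
    set zx := lam i * (Finset.univ.sup' Finset.univ_nonempty fun j => prev.eval f x j + w i j) +
        (1 - lam i) * (Finset.univ.inf' Finset.univ_nonempty fun j => prev.eval f x j + mw i j)
      with hzx
    set zy := lam i * (Finset.univ.sup' Finset.univ_nonempty fun j => prev.eval f y j + w i j) +
        (1 - lam i) * (Finset.univ.inf' Finset.univ_nonempty fun j => prev.eval f y j + mw i j)
      with hzy
    have hz1 : zx ≤ zy := by nlinarith
    have hz2 : zy ≤ zx + s ^ c * M := by nlinarith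
    have heval : ∀ u : Fin d → ℝ,
        (ADEPNet.layer prev act lam hlam w mw).eval f u i =
        (if act then f (lam i * (Finset.univ.sup' Finset.univ_nonempty fun j => prev.eval f u j + w i j) +
          (1 - lam i) * (Finset.univ.inf' Finset.univ_nonempty fun j => prev.eval f u j + mw i j))
        else (lam i * (Finset.univ.sup' Finset.univ_nonempty fun j => prev.eval f u j + w i j) +
          (1 - lam i) * (Finset.univ.inf' Finset.univ_nonempty fun j => prev.eval f u j + mw i j))) := by
      intro u; rfl
    rw [heval x, heval y]
    cases act with
    | false =>
      simp only [if_false, ADEPNet.countAct, Bool.false_eq_true]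
      rw [← hzx, ← hzy]
      simpa using ⟨hz1, hz2⟩
    | true =>
      simp only [if_true, ADEPNet.countAct]
      rw [← hzx, ← hzy]
      have hfz := hfm zx zy hz1
      have : s ^ (c + 1) = s ^ c * s := pow_succ s c
      constructor
      · linarith [hfz.1]
      · have := hfz.2
        rw [pow_succ]
        nlinarith

/-- For an activated DEP-based network whose activation `f` satisfies `0 ≤ f' ≤ s ≤ 1`
almost everywhere, the single output `y` is Lipschitz on `ℝ^d` and almost everywhere its
gradient is componentwise nonnegative with ℓ¹-norm at most `s^L̃ ≤ 1`, where `L̃` is the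
number of activated layers. -/
theorem adepnet_lipschitz_grad_nonneg_l1_le (d : ℕ) (f : ℝ → ℝ) (s : ℝ)
    (hs0 : 0 ≤ s) (hs1 : s ≤ 1) (hf : LipschitzWith s.toNNReal f)
    (hf' : ∀ᵐ t ∂volume, 0 ≤ deriv f t ∧ deriv f t ≤ s)
    (net : ADEPNet d 1) :
    (∃ K : NNReal, LipschitzWith K fun x => net.eval f x 0) ∧
      ∀ᵐ x ∂volume, DifferentiableAt ℝ (fun x => net.eval f x 0) x ∧
        (∀ j, 0 ≤ fderiv ℝ (fun x => net.eval f x 0) x (Pi.single j 1)) ∧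
        ∑ j, |fderiv ℝ (fun x => net.eval f x 0) x (Pi.single j 1)| ≤ s ^ net.countAct ∧
        s ^ net.countAct ≤ 1 := by
  have hfm : ∀ a b : ℝ, a ≤ b → 0 ≤ f b - f a ∧ f b - f a ≤ s * (b - a) :=
    lip_ftc_bound f s hs0 hf hf'
  have key := adep_key d f s hs0 hfm net 0
  set g : (Fin d → ℝ) → ℝ := fun x => net.eval f x 0 with hg
  set c := net.countAct with hc
  have hsc0 : 0 ≤ s ^ c := pow_nonneg hs0 c
  have hsc1 : s ^ c ≤ 1 := pow_le_one₀ hs0 hs1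
  have hdistbound : ∀ x y : Fin d → ℝ, dist (g x) (g y) ≤ 1 * dist x y := by
    intro x y
    set u : Fin d → ℝ := fun j => max (x j) (y j) with hu
    have hM : (0:ℝ) ≤ dist x y := dist_nonneg
    have hpt : ∀ j, dist (x j) (y j) ≤ dist x y := fun j => dist_le_pi_dist x y j
    have hux : ∀ j, u j ≤ x j + dist x y := by
      intro j
      have h1 := hpt j
      rw [Real.dist_eq] at h1
      have h2 : y j - x j ≤ |x j - y j| := by
        rw [abs_sub_comm]; exact le_trans (le_abs_self _) le_rfl
      simp only [hu, max_le_iff]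
      constructor <;> linarith
    have huy : ∀ j, u j ≤ y j + dist x y := by
      intro j
      have h1 := hpt j
      rw [Real.dist_eq] at h1
      have h2 : x j - y j ≤ |x j - y j| := le_abs_self _
      simp only [hu, max_le_iff]
      constructor <;> linarith
    have k1 : g x ≤ g u ∧ g u ≤ g x + s ^ c * dist x y :=
      key x u (dist x y) hM (fun j => le_max_left _ _) hux
    have k2 : g y ≤ g u ∧ g u ≤ g y + s ^ c * dist x y :=
      key y u (dist x y) hM (fun j => le_max_right _ _) huy
    rw [Real.dist_eq, abs_le]
    have hmul : s ^ c * dist x y ≤ 1 * dist x y := by nlinarith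
    constructor
    · linarith [k1.1, k2.2]
    · linarith [k2.1, k1.2]
  have hLip : LipschitzWith 1 g :=
    LipschitzWith.of_dist_le_mul (by simpa using hdistbound)
  refine ⟨⟨1, hLip⟩, ?_⟩
  filter_upwards [hLip.ae_differentiableAt (μ := volume)] with x hx
  have hdir : ∀ (v : Fin d → ℝ), (∀ j, 0 ≤ v j) → (∀ j, v j ≤ 1) →
      0 ≤ fderiv ℝ g x v ∧ fderiv ℝ g x v ≤ s ^ c := by
    intro v h0 h1
    have hline : HasDerivAt (fun t : ℝ => g (x + t • v)) (fderiv ℝ g x v) 0 := by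
      have h2 : HasDerivAt (fun t : ℝ => x + t • v) v 0 := by
        simpa using ((hasDerivAt_id (0 : ℝ)).smul_const v).const_add x
      have hfd : HasFDerivAt g (fderiv ℝ g x) (x + (0:ℝ) • v) := by
        simpa using hx.hasFDerivAt
      exact hfd.comp_hasDerivAt 0 h2
    rw [hasDerivAt_iff_tendsto_slope] at hline
    have hsub : 𝓝[>] (0:ℝ) ≤ 𝓝[≠] (0:ℝ) :=
      nhdsWithin_mono 0 fun t ht => ne_of_gt ht
    have hline' := hline.mono_left hsub
    have hev : ∀ᶠ t in 𝓝[>] (0:ℝ),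
        slope (fun t : ℝ => g (x + t • v)) 0 t ∈ Set.Icc (0:ℝ) (s ^ c) := by
      filter_upwards [self_mem_nhdsWithin] with t (ht : (0:ℝ) < t)
      have hk : g x ≤ g (x + t • v) ∧ g (x + t • v) ≤ g x + s ^ c * t :=
        key x (x + t • v) t ht.le
        (fun j => by
          simp only [Pi.add_apply, Pi.smul_apply, smul_eq_mul, le_add_iff_nonneg_right]
          exact mul_nonneg ht.le (h0 j))
        (fun j => by
          simp only [Pi.add_apply, Pi.smul_apply, smul_eq_mul, add_le_add_iff_left]
          nlinarith [h1 j, h0 j])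
      have hslope : slope (fun t : ℝ => g (x + t • v)) 0 t = (g (x + t • v) - g x) / t := by
        simp [slope, inv_mul_eq_div]
      rw [hslope]
      constructor
      · apply div_nonneg _ ht.le; linarith [hk.1]
      · rw [div_le_iff₀ ht]; linarith [hk.2]
    exact ⟨ge_of_tendsto hline' (hev.mono fun t h => h.1),
      le_of_tendsto hline' (hev.mono fun t h => h.2)⟩
  have hsingle0 : ∀ j j' : Fin d, (0:ℝ) ≤ (Pi.single j 1 : Fin d → ℝ) j' := by
    intro j j'
    rcases eq_or_ne j' j with h | h
    · subst h; simp
    · simp [Pi.single_apply, h]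
  have hsingle1 : ∀ j j' : Fin d, (Pi.single j 1 : Fin d → ℝ) j' ≤ 1 := by
    intro j j'
    rcases eq_or_ne j' j with h | h
    · subst h; simp
    · simp [Pi.single_apply, h]
  refine ⟨hx, fun j => (hdir (Pi.single j 1) (hsingle0 j) (hsingle1 j)).1, ?_, hsc1⟩
  have hsum : ∑ j, |fderiv ℝ g x (Pi.single j 1)| = fderiv ℝ g x (fun _ => 1) := by
    rw [Finset.sum_congr rfl
      (fun j _ => abs_of_nonneg ((hdir (Pi.single j 1) (hsingle0 j) (hsingle1 j)).1))]
    rw [← map_sum]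
    congr 1
    exact Finset.univ_sum_single (fun _ => (1:ℝ))
  rw [hsum]
  exact (hdir (fun _ => 1) (fun _ => zero_le_one) (fun _ => le_rfl)).2
end

section
/- Existing DEP-based networks are not universal approximators: for any compact convex B ⊆ ℝ^d with nonempty interior, the class of single-output functions computed by DEP-based networks (possibly activated by functions with derivative bounded in [0,1] a.e.) restricted to B is not dense in C(B) under the sup-norm. -/
open MeasureTheory

section aux

variable {α : Type*} [PseudoMetricSpace α]

lemma lip_sup' {ι : Type*} (s : Finset ι) (hs : s.Nonempty) (F : ι → α → ℝ)
    (hF : ∀ j ∈ s, LipschitzWith 1 (F j)) :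
    LipschitzWith 1 (fun x => s.sup' hs fun j => F j x) := by
  induction hs using Finset.Nonempty.cons_induction with
  | singleton a =>
      have h1 : (fun x => ({a} : Finset ι).sup' (Finset.singleton_nonempty a) fun j => F j x)
          = F a := by
        funext x
        exact Finset.sup'_singleton (f := fun j => F j x)
      rw [h1]
      exact hF a (by simp)
  | cons a s ha hs ih =>
      have h1 : (fun x => (Finset.cons a s ha).sup' (Finset.cons_nonempty ha) fun j => F j x)
          = fun x => max (F a x) (s.sup' hs fun j => F j x) := by
        funext x
        exact Finset.sup'_cons (f := fun j => F j x) hs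
      rw [h1]
      simpa using (hF a (by simp)).max (ih fun j hj => hF j (by simp [hj]))

lemma lip_inf' {ι : Type*} (s : Finset ι) (hs : s.Nonempty) (F : ι → α → ℝ)
    (hF : ∀ j ∈ s, LipschitzWith 1 (F j)) :
    LipschitzWith 1 (fun x => s.inf' hs fun j => F j x) := by
  induction hs using Finset.Nonempty.cons_induction with
  | singleton a =>
      have h1 : (fun x => ({a} : Finset ι).inf' (Finset.singleton_nonempty a) fun j => F j x)
          = F a := by
        funext x
        exact Finset.inf'_singleton (f := fun j => F j x)
      rw [h1]
      exact hF a (by simp)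
  | cons a s ha hs ih =>
      have h1 : (fun x => (Finset.cons a s ha).inf' (Finset.cons_nonempty ha) fun j => F j x)
          = fun x => min (F a x) (s.inf' hs fun j => F j x) := by
        funext x
        exact Finset.inf'_cons (f := fun j => F j x) hs
      rw [h1]
      simpa using (hF a (by simp)).min (ih fun j hj => hF j (by simp [hj]))

lemma lip_combo {lam : ℝ} (h0 : 0 ≤ lam) (h1 : lam ≤ 1) {a b : α → ℝ}
    (ha : LipschitzWith 1 a) (hb : LipschitzWith 1 b) :
    LipschitzWith 1 (fun x => lam * a x + (1 - lam) * b x) := by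
  refine LipschitzWith.of_dist_le_mul fun x y => ?_
  have Ha : dist (a x) (a y) ≤ dist x y := by simpa using ha.dist_le_mul x y
  have Hb : dist (b x) (b y) ≤ dist x y := by simpa using hb.dist_le_mul x y
  simp only [Real.dist_eq] at Ha Hb ⊢
  have h2 : |lam * (a x - a y)| ≤ lam * dist x y := by
    rw [abs_mul, abs_of_nonneg h0]
    exact mul_le_mul_of_nonneg_left (by simpa [Real.dist_eq] using Ha) h0
  have h3 : |(1 - lam) * (b x - b y)| ≤ (1 - lam) * dist x y := by
    rw [abs_mul, abs_of_nonneg (by linarith)]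
    exact mul_le_mul_of_nonneg_left (by simpa [Real.dist_eq] using Hb) (by linarith)
  calc |lam * a x + (1 - lam) * b x - (lam * a y + (1 - lam) * b y)|
      = |lam * (a x - a y) + (1 - lam) * (b x - b y)| := by ring_nf
    _ ≤ |lam * (a x - a y)| + |(1 - lam) * (b x - b y)| := abs_add_le _ _
    _ ≤ lam * dist x y + (1 - lam) * dist x y := add_le_add h2 h3
    _ = 1 * dist x y := by ring

end aux

lemma lip_add_const {α : Type*} [PseudoMetricSpace α] {F : α → ℝ}
    (hF : LipschitzWith 1 F) (c : ℝ) : LipschitzWith 1 (fun x => F x + c) := by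
  refine LipschitzWith.of_dist_le_mul fun x y => ?_
  simpa [Real.dist_eq] using hF.dist_le_mul x y

lemma adep_lip {d : ℕ} (f : ℝ → ℝ) (hf : LipschitzWith 1 f) :
    ∀ {k : ℕ} (net : ADEPNet d k) (i : Fin k),
      LipschitzWith 1 (fun x => net.eval f x i) := by
  intro k net
  induction net with
  | input =>
      intro i
      simpa [ADEPNet.eval] using (LipschitzWith.eval (α := fun _ : Fin d => ℝ) i)
  | layer prev act lam hlam w mw ih =>
      intro i
      have hz : LipschitzWith 1 (fun x =>
          lam i * (Finset.univ.sup' Finset.univ_nonempty fun j => prev.eval f x j + w i j) +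
          (1 - lam i) *
            (Finset.univ.inf' Finset.univ_nonempty fun j => prev.eval f x j + mw i j)) := by
        refine lip_combo (hlam i).1 (hlam i).2 ?_ ?_
        · exact lip_sup' _ _ _ fun j _ => lip_add_const (ih j) (w i j)
        · exact lip_inf' _ _ _ fun j _ => lip_add_const (ih j) (mw i j)
      cases act with
      | false => simpa [ADEPNet.eval] using hz
      | true =>
          have := hf.comp hz
          simpa [ADEPNet.eval, Function.comp_def] using this

lemma adep_zero_empty : ∀ {k : ℕ}, ADEPNet 0 k → k = 0 := by
  intro k net
  induction net with
  | input => rfl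
  | layer prev act lam hlam w mw ih => exact absurd ih (Nat.succ_ne_zero _)

/-- DEP-based networks (possibly activated by a Lipschitz activation whose derivative lies
in `[0, 1]` a.e.) are not universal approximators: on any compact convex `B ⊆ ℝ^d` with
nonempty interior, the class of single-output functions they compute is not dense in `C(B)`
for the sup-norm. -/
theorem depnet_not_universal (d : ℕ) (B : Set (Fin d → ℝ))
    (hBc : IsCompact B) (hBconv : Convex ℝ B) (hBint : (interior B).Nonempty) :
    ∃ g : (Fin d → ℝ) → ℝ, ContinuousOn g B ∧ ∃ ε > (0 : ℝ),
      ∀ (net : ADEPNet d 1) (f : ℝ → ℝ), LipschitzWith 1 f →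
        (∀ᵐ t ∂volume, 0 ≤ deriv f t ∧ deriv f t ≤ 1) →
        ∃ x ∈ B, ε ≤ |net.eval f x 0 - g x| := by
  rcases Nat.eq_zero_or_pos d with hd | hd
  · subst hd
    refine ⟨0, continuousOn_const, 1, one_pos, fun net => ?_⟩
    exact absurd (adep_zero_empty net) one_ne_zero
  · set i0 : Fin d := ⟨0, hd⟩
    obtain ⟨x₀, hx₀⟩ := hBint
    obtain ⟨r, hr, hball⟩ := Metric.isOpen_iff.mp isOpen_interior x₀ hx₀
    have hballB : Metric.ball x₀ r ⊆ B := hball.trans interior_subset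
    refine ⟨fun x => 2 * x i0, (continuous_const.mul (continuous_apply i0)).continuousOn,
      r / 4, by linarith, fun net f hf _ => ?_⟩
    set h : (Fin d → ℝ) → ℝ := fun x => net.eval f x 0 with hh_def
    have hh : LipschitzWith 1 h := adep_lip f hf net 0
    set b : Fin d → ℝ := Function.update x₀ i0 (x₀ i0 + r / 2) with hb_def
    have hdab : dist x₀ b ≤ r / 2 := by
      rw [dist_pi_le_iff (by linarith)]
      intro i
      rcases eq_or_ne i i0 with rfl | hne
      · simp [hb_def, Real.dist_eq, abs_of_nonneg, le_of_lt hr]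
      · simp only [hb_def, Function.update_of_ne hne, dist_self]
        linarith
    have hbB : b ∈ B := hballB (by
      rw [Metric.mem_ball, dist_comm]
      exact lt_of_le_of_lt hdab (by linarith))
    have haB : x₀ ∈ B := interior_subset hx₀
    by_contra hcon
    push_neg at hcon
    have h1 := hcon x₀ haB
    have h2 := hcon b hbB
    have hlip : |h x₀ - h b| ≤ r / 2 := by
      have := hh.dist_le_mul x₀ b
      rw [Real.dist_eq] at this
      calc |h x₀ - h b| ≤ 1 * dist x₀ b := this
        _ ≤ r / 2 := by linarith
    have hgb : b i0 = x₀ i0 + r / 2 := by simp [hb_def]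
    rw [abs_lt] at h1 h2
    rw [abs_le] at hlip
    rw [hgb] at h2
    linarith [h1.1, h1.2, h2.1, h2.2, hlip.1, hlip.2]
end

section
/- Any continuous function on a compact set can be uniformly approximated by a difference of two max-affine functions: the class of functions of the form x ↦ max_{k∈[K]} (a_kᵀx + b_k) − max_{m∈[M]} (c_mᵀx + d_m) (equivalently, max_{k}(a_kᵀx + b_k) + min_{m}(c̃_mᵀx + d̃_m)) is dense under the sup-norm in the class of continuous functions on any compact subset of ℝ^d. -/
/-- A function is "max-affine": a finite pointwise max of affine functions. -/
def MA (d : ℕ) (f : (Fin d → ℝ) → ℝ) : Prop :=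
  ∃ (K : ℕ) (a : Fin (K + 1) → Fin d → ℝ) (b : Fin (K + 1) → ℝ),
    ∀ x, f x = Finset.univ.sup' Finset.univ_nonempty fun k => ∑ i, a k i * x i + b k

lemma MA_congr {d : ℕ} {f g : (Fin d → ℝ) → ℝ} (h : ∀ x, f x = g x) (hf : MA d f) :
    MA d g := by
  obtain ⟨K, a, b, hab⟩ := hf
  exact ⟨K, a, b, fun x => (h x) ▸ hab x⟩

lemma MA_affine {d : ℕ} (a : Fin d → ℝ) (b : ℝ) :
    MA d (fun x => ∑ i, a i * x i + b) := by
  refine ⟨0, fun _ => a, fun _ => b, fun x => ?_⟩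
  simp

lemma MA_const {d : ℕ} (c : ℝ) : MA d (fun _ => c) := by
  refine MA_congr (f := fun x => ∑ i, (0 : Fin d → ℝ) i * x i + c) (fun x => by simp)
    (MA_affine _ _)

lemma sup'_equiv {α β : Type*} [Fintype α] [Fintype β] [Nonempty α] [Nonempty β]
    (e : α ≃ β) (f : β → ℝ) :
    (Finset.univ.sup' Finset.univ_nonempty fun a => f (e a)) =
      Finset.univ.sup' Finset.univ_nonempty f := by
  apply le_antisymm
  · exact Finset.sup'_le _ _ fun a _ => Finset.le_sup' f (Finset.mem_univ (e a))
  · refine Finset.sup'_le _ _ fun b _ => ?_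
    have h := Finset.le_sup' (fun a => f (e a)) (Finset.mem_univ (e.symm b))
    simpa only [Equiv.apply_symm_apply] using h

lemma MA_add {d : ℕ} {f g : (Fin d → ℝ) → ℝ} (hf : MA d f) (hg : MA d g) :
    MA d (fun x => f x + g x) := by
  obtain ⟨K, a, b, hab⟩ := hf
  obtain ⟨M, c, e, hce⟩ := hg
  have hKM : (K + 1) * (M + 1) = K * M + K + M + 1 := by ring
  let E : Fin (K * M + K + M + 1) ≃ Fin (K + 1) × Fin (M + 1) :=
    (finCongr hKM.symm).trans finProdFinEquiv.symm
  refine ⟨K * M + K + M, fun p => a (E p).1 + c (E p).2, fun p => b (E p).1 + e (E p).2,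
    fun x => ?_⟩
  have key : ∀ p : Fin (K + 1) × Fin (M + 1),
      (∑ i, (a p.1 + c p.2) i * x i + (b p.1 + e p.2)) =
        (∑ i, a p.1 i * x i + b p.1) + (∑ i, c p.2 i * x i + e p.2) := by
    intro p
    simp only [Pi.add_apply, add_mul, Finset.sum_add_distrib]
    ring
  show f x + g x = _
  rw [hab x, hce x]
  rw [show (Finset.univ.sup' Finset.univ_nonempty
      fun p : Fin (K * M + K + M + 1) => ∑ i, (a (E p).1 + c (E p).2) i * x i +
        (b (E p).1 + e (E p).2)) =
      Finset.univ.sup' Finset.univ_nonempty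
        (fun p : Fin (K + 1) × Fin (M + 1) =>
          (∑ i, a p.1 i * x i + b p.1) + (∑ i, c p.2 i * x i + e p.2)) from by
    rw [← sup'_equiv E]
    exact Finset.sup'_congr _ rfl (fun p _ => key _)]
  apply le_antisymm
  swap
  · apply Finset.sup'_le
    intro p _
    exact add_le_add
      (Finset.le_sup' (fun k : Fin (K+1) => ∑ i, a k i * x i + b k) (Finset.mem_univ p.1))
      (Finset.le_sup' (fun m : Fin (M+1) => ∑ i, c m i * x i + e m) (Finset.mem_univ p.2))
  · obtain ⟨k, _, hk⟩ := Finset.exists_mem_eq_sup' Finset.univ_nonempty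
      (fun k : Fin (K+1) => ∑ i, a k i * x i + b k)
    obtain ⟨m, _, hm⟩ := Finset.exists_mem_eq_sup' Finset.univ_nonempty
      (fun m : Fin (M+1) => ∑ i, c m i * x i + e m)
    rw [hk, hm]
    exact Finset.le_sup' (fun p : Fin (K+1) × Fin (M+1) =>
      ∑ i, a p.1 i * x i + b p.1 + (∑ i, c p.2 i * x i + e p.2)) (Finset.mem_univ (k, m))

lemma MA_max {d : ℕ} {f g : (Fin d → ℝ) → ℝ} (hf : MA d f) (hg : MA d g) :
    MA d (fun x => max (f x) (g x)) := by
  obtain ⟨K, a, b, hab⟩ := hf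
  obtain ⟨M, c, e, hce⟩ := hg
  have hKM : (K + 1) + (M + 1) = (K + M + 1) + 1 := by ring
  let E : Fin (K + M + 1 + 1) ≃ Fin (K + 1) ⊕ Fin (M + 1) :=
    (finCongr hKM.symm).trans finSumFinEquiv.symm
  refine ⟨K + M + 1, fun p => Sum.elim a c (E p), fun p => Sum.elim b e (E p), fun x => ?_⟩
  show max (f x) (g x) = _
  rw [hab x, hce x]
  rw [show (Finset.univ.sup' Finset.univ_nonempty
      fun p : Fin (K + M + 1 + 1) => ∑ i, Sum.elim a c (E p) i * x i + Sum.elim b e (E p)) =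
      Finset.univ.sup' Finset.univ_nonempty
        (fun q : Fin (K + 1) ⊕ Fin (M + 1) => ∑ i, Sum.elim a c q i * x i + Sum.elim b e q)
      from by rw [← sup'_equiv E]]
  apply le_antisymm
  · apply max_le
    · apply Finset.sup'_le
      intro k _
      exact Finset.le_sup' (f := fun q : Fin (K+1) ⊕ Fin (M+1) =>
        ∑ i, Sum.elim a c q i * x i + Sum.elim b e q) (Finset.mem_univ (Sum.inl k))
    · apply Finset.sup'_le
      intro m _
      exact Finset.le_sup' (f := fun q : Fin (K+1) ⊕ Fin (M+1) =>
        ∑ i, Sum.elim a c q i * x i + Sum.elim b e q) (Finset.mem_univ (Sum.inr m))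
  · apply Finset.sup'_le
    intro q _
    rcases q with k | m
    · simp only [Sum.elim_inl]
      exact le_max_of_le_left
        (Finset.le_sup' (fun k : Fin (K+1) => ∑ i, a k i * x i + b k) (Finset.mem_univ k))
    · simp only [Sum.elim_inr]
      exact le_max_of_le_right
        (Finset.le_sup' (fun m : Fin (M+1) => ∑ i, c m i * x i + e m) (Finset.mem_univ m))

lemma MA_sum {d : ℕ} {ι : Type*} (s : Finset ι) (F : ι → (Fin d → ℝ) → ℝ)
    (h : ∀ y ∈ s, MA d (F y)) : MA d (fun x => ∑ y ∈ s, F y x) := by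
  induction s using Finset.cons_induction with
  | empty => exact MA_congr (fun x => by simp) (MA_const 0)
  | cons a s ha ih =>
    refine MA_congr (f := fun x => F a x + ∑ y ∈ s, F y x) (fun x => by
      rw [Finset.sum_cons]) ?_
    exact MA_add (h a (Finset.mem_cons_self a s)) (ih fun y hy => h y (Finset.mem_cons_of_mem hy))

lemma MA_sup' {d : ℕ} {ι : Type*} (s : Finset ι) (hs : s.Nonempty) (F : ι → (Fin d → ℝ) → ℝ)
    (h : ∀ y ∈ s, MA d (F y)) : MA d (fun x => s.sup' hs fun y => F y x) := by
  induction hs using Finset.Nonempty.cons_induction with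
  | singleton a => exact MA_congr (fun x => by simp) (h a (by simp))
  | cons a s ha hs ih =>
    refine MA_congr (f := fun x => max (F a x) (s.sup' hs fun y => F y x)) (fun x => by
      rw [Finset.sup'_cons]) ?_
    exact MA_max (h a (Finset.mem_cons_self a s))
      (ih fun y hy => h y (Finset.mem_cons_of_mem hy))

lemma MA_coord {d : ℕ} (i : Fin d) (c b : ℝ) : MA d (fun x => c * x i + b) := by
  refine MA_congr (f := fun x => ∑ j, (if j = i then c else 0) * x j + b)
    (fun x => ?_) (MA_affine _ _)
  simp [ite_mul, Finset.sum_ite_eq']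

lemma sup'_const_add {ι : Type*} (s : Finset ι) (hs : s.Nonempty) (c : ℝ) (f : ι → ℝ) :
    s.sup' hs (fun y => c + f y) = c + s.sup' hs f := by
  apply le_antisymm
  · exact Finset.sup'_le _ _ fun y hy => add_le_add le_rfl (Finset.le_sup' f hy)
  · obtain ⟨y, hy, h⟩ := Finset.exists_mem_eq_sup' hs f
    rw [h]
    exact Finset.le_sup' (fun y => c + f y) hy

lemma dist_mul_eq_sup' {d : ℕ} (L : ℝ) (hL : 0 < L) (y x : Fin d → ℝ) :
    L * dist x y = Finset.univ.sup' Finset.univ_nonempty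
      (fun o : Option (Fin d × Bool) =>
        o.elim 0 fun p => if p.2 then L * (x p.1 - y p.1) else L * (y p.1 - x p.1)) := by
  set D := Finset.univ.sup' Finset.univ_nonempty
      (fun o : Option (Fin d × Bool) =>
        o.elim 0 fun p => if p.2 then L * (x p.1 - y p.1) else L * (y p.1 - x p.1)) with hD
  have hD0 : (0 : ℝ) ≤ D := by
    have := Finset.le_sup' (f := fun o : Option (Fin d × Bool) =>
        o.elim 0 fun p => if p.2 then L * (x p.1 - y p.1) else L * (y p.1 - x p.1))
      (Finset.mem_univ none)
    exact this
  apply le_antisymm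
  · have hdist : dist x y ≤ D / L := by
      refine dist_pi_le_iff (div_nonneg hD0 hL.le) |>.2 fun i => ?_
      rw [Real.dist_eq, abs_sub_le_iff]
      constructor
      · rw [le_div_iff₀ hL, mul_comm]
        have := Finset.le_sup' (f := fun o : Option (Fin d × Bool) =>
            o.elim 0 fun p => if p.2 then L * (x p.1 - y p.1) else L * (y p.1 - x p.1))
          (Finset.mem_univ (some (i, true)))
        exact this
      · rw [le_div_iff₀ hL, mul_comm]
        have := Finset.le_sup' (f := fun o : Option (Fin d × Bool) =>
            o.elim 0 fun p => if p.2 then L * (x p.1 - y p.1) else L * (y p.1 - x p.1))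
          (Finset.mem_univ (some (i, false)))
        exact this
    calc L * dist x y ≤ L * (D / L) := by
          exact mul_le_mul_of_nonneg_left hdist hL.le
      _ = D := by field_simp
  · apply Finset.sup'_le
    rintro (_ | ⟨i, s⟩) -
    · exact mul_nonneg hL.le dist_nonneg
    · have hle : dist (x i) (y i) ≤ dist x y := dist_le_pi_dist x y i
      rw [Real.dist_eq] at hle
      rcases s with _ | _ <;> simp only [Option.elim, if_true, if_false, Bool.false_eq_true]
      · have : y i - x i ≤ |x i - y i| := by
          rw [abs_sub_comm]; exact le_abs_self _
        calc L * (y i - x i) ≤ L * |x i - y i| := mul_le_mul_of_nonneg_left this hL.le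
          _ ≤ L * dist x y := mul_le_mul_of_nonneg_left hle hL.le
      · calc L * (x i - y i) ≤ L * |x i - y i| :=
            mul_le_mul_of_nonneg_left (le_abs_self _) hL.le
          _ ≤ L * dist x y := mul_le_mul_of_nonneg_left hle hL.le

lemma MA_phi {d : ℕ} (L : ℝ) (hL : 0 < L) (y : Fin d → ℝ) (c : ℝ) :
    MA d (fun x => L * dist x y + c) := by
  refine MA_add ?_ (MA_const c)
  refine MA_congr (f := fun x => Finset.univ.sup' Finset.univ_nonempty
      (fun o : Option (Fin d × Bool) =>
        (fun o x => o.elim 0 fun p : Fin d × Bool =>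
          if p.2 then L * (x p.1 - y p.1) else L * (y p.1 - x p.1)) o x))
    (fun x => (dist_mul_eq_sup' L hL y x).symm) ?_
  refine MA_sup' _ _ _ ?_
  rintro (_ | ⟨i, s⟩) -
  · exact MA_const 0
  · rcases s with _ | _
    · exact MA_congr (f := fun x => (-L) * x i + L * y i) (fun x => by simp; ring)
        (MA_coord i (-L) (L * y i))
    · exact MA_congr (f := fun x => L * x i + (-(L * y i))) (fun x => by simp; ring)
        (MA_coord i L (-(L * y i)))

/-- Differences of max-affine functions (equivalently, a max-affine plus a min-affine
function) are dense, for the sup-norm, in the continuous functions on any compact subset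
of `ℝ^d`. -/
theorem maxaffine_difference_dense (d : ℕ) (S : Set (Fin d → ℝ)) (hS : IsCompact S)
    (g : (Fin d → ℝ) → ℝ) (hg : ContinuousOn g S) (ε : ℝ) (hε : 0 < ε) :
    ∃ (K M : ℕ) (a : Fin (K + 1) → Fin d → ℝ) (b : Fin (K + 1) → ℝ)
      (c : Fin (M + 1) → Fin d → ℝ) (e : Fin (M + 1) → ℝ),
      ∀ x ∈ S,
        |((Finset.univ.sup' Finset.univ_nonempty fun k => ∑ i, a k i * x i + b k) -
            (Finset.univ.sup' Finset.univ_nonempty fun m => ∑ i, c m i * x i + e m)) -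
          g x| ≤ ε := by
  rcases S.eq_empty_or_nonempty with hemp | ⟨x₀, hx₀⟩
  · exact ⟨0, 0, fun _ => 0, fun _ => 0, fun _ => 0, fun _ => 0,
      fun x hx => by rw [hemp] at hx; exact absurd hx (Set.notMem_empty x)⟩
  -- a bound for g on S
  obtain ⟨B, hB⟩ := (hS.image_of_continuousOn hg).isBounded.exists_norm_le
  have hB' : ∀ z ∈ S, |g z| ≤ B := fun z hz => by
    have := hB (g z) (Set.mem_image_of_mem g hz)
    rwa [Real.norm_eq_abs] at this
  have hB0 : 0 ≤ B := le_trans (abs_nonneg _) (hB' x₀ hx₀)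
  -- uniform continuity
  obtain ⟨δ, hδ, hδ'⟩ := Metric.uniformContinuousOn_iff.1
    (hS.uniformContinuousOn_of_continuous hg) (ε / 2) (half_pos hε)
  -- the Lipschitz constant
  set L : ℝ := 2 * B / δ + 1 with hLdef
  have hL : 0 < L := by positivity
  -- the net scale
  set δ₂ : ℝ := min δ (ε / (2 * L)) with hδ₂def
  have hδ₂ : 0 < δ₂ := lt_min hδ (by positivity)
  -- the finite net
  have hcover : S ⊆ ⋃ y ∈ S, Metric.ball y δ₂ := fun z hz =>
    Set.mem_biUnion hz (Metric.mem_ball_self hδ₂)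
  obtain ⟨t0, ht0S, ht0fin, ht0cov⟩ :=
    hS.elim_finite_subcover_image (fun y _ => Metric.isOpen_ball) hcover
  set t : Finset (Fin d → ℝ) := ht0fin.toFinset with htdef
  have htmem : ∀ y, y ∈ t ↔ y ∈ t0 := fun y => ht0fin.mem_toFinset
  have ht : t.Nonempty := by
    obtain ⟨y, hy, -⟩ := Set.mem_iUnion₂.1 (ht0cov hx₀)
    exact ⟨y, (htmem y).2 hy⟩
  -- the building blocks
  set φ : (Fin d → ℝ) → (Fin d → ℝ) → ℝ := fun y x => L * dist x y + (-(g y)) with hφdef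
  have hφMA : ∀ y, MA d (φ y) := fun y => MA_phi L hL y _
  set U : (Fin d → ℝ) → ℝ := fun x => ∑ y ∈ t, φ y x with hUdef
  set T : (Fin d → ℝ) → ℝ := fun x => t.sup' ht fun y => ∑ y' ∈ t.erase y, φ y' x with hTdef
  have hUMA : MA d U := MA_sum t φ fun y _ => hφMA y
  have hTMA : MA d T := MA_sup' t ht _ fun y _ => MA_sum _ φ fun y' _ => hφMA y'
  obtain ⟨K, a, b, hTr⟩ := hTMA
  obtain ⟨M, c, e, hUr⟩ := hUMA
  refine ⟨K, M, a, b, c, e, fun x hx => ?_⟩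
  rw [← hTr x, ← hUr x]
  -- the key identity : T x - U x = sup over the net of (g y - L * dist x y)
  have hkey : T x - U x = t.sup' ht fun y => g y - L * dist x y := by
    have e1 : (t.sup' ht fun y => ∑ y' ∈ t.erase y, φ y' x) =
        t.sup' ht fun y => U x + (-(φ y x)) := by
      refine Finset.sup'_congr ht rfl fun y hy => ?_
      have := Finset.add_sum_erase t (fun y' => φ y' x) hy
      simp only [hUdef]
      linarith
    rw [hTdef]
    simp only [e1, sup'_const_add t ht (U x) fun y => -(φ y x)]
    have e2 : (t.sup' ht fun y => -(φ y x)) = t.sup' ht fun y => g y - L * dist x y :=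
      Finset.sup'_congr ht rfl fun y _ => by simp [hφdef]; ring
    rw [e2]
    ring
  rw [hkey]
  -- the two-sided estimate
  set D : ℝ := t.sup' ht fun y => g y - L * dist x y with hDdef
  clear_value L δ₂ t φ U T D
  -- upper bound
  have hup : D ≤ g x + ε / 2 := by
    rw [hDdef]
    apply Finset.sup'_le
    intro y hy
    have hyS : y ∈ S := ht0S ((htmem y).1 hy)
    by_cases hd : dist x y < δ
    · have := hδ' x hx y hyS hd
      rw [Real.dist_eq] at this
      have h1 : g y - g x ≤ ε / 2 := by
        have habs := abs_le.1 this.le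
        linarith [habs.1]
      have h2 : 0 ≤ L * dist x y := mul_nonneg hL.le dist_nonneg
      linarith
    · push_neg at hd
      have h1 : g y - g x ≤ 2 * B := by
        have := hB' y hyS
        have := hB' x hx
        have h3 := abs_le.1 (hB' y hyS)
        have h4 := abs_le.1 (hB' x hx)
        linarith [h3.2, h4.1]
      have h2 : 2 * B = (2 * B / δ) * δ := by field_simp
      have h3 : (2 * B / δ) * δ ≤ L * δ := by
        apply mul_le_mul_of_nonneg_right _ hδ.le
        rw [hLdef]; linarith
      have h4 : L * δ ≤ L * dist x y := mul_le_mul_of_nonneg_left hd hL.le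
      linarith
  -- lower bound
  have hlo : g x - ε ≤ D := by
    obtain ⟨y₀, hy₀, hxy₀⟩ := Set.mem_iUnion₂.1 (ht0cov hx)
    have hy₀t : y₀ ∈ t := (htmem y₀).2 hy₀
    have hy₀S : y₀ ∈ S := ht0S hy₀
    have hd : dist x y₀ < δ₂ := Metric.mem_ball.1 hxy₀
    have h1 : L * dist x y₀ ≤ ε / 2 := by
      have h2 : dist x y₀ ≤ ε / (2 * L) :=
        le_trans hd.le (by rw [hδ₂def]; exact min_le_right _ _)
      calc L * dist x y₀ ≤ L * (ε / (2 * L)) := mul_le_mul_of_nonneg_left h2 hL.le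
        _ = ε / 2 := by field_simp
    have h3 : |g x - g y₀| < ε / 2 := by
      have := hδ' x hx y₀ hy₀S
        (lt_of_lt_of_le hd (by rw [hδ₂def]; exact min_le_left _ _))
      rwa [Real.dist_eq] at this
    have h4 : g y₀ - L * dist x y₀ ≤ D := by
      rw [hDdef]
      exact Finset.le_sup' (fun y => g y - L * dist x y) hy₀t
    have h5 := (abs_le.1 h3.le).2
    linarith [h1, h4, h5]
  rw [abs_le]
  constructor <;> linarith
end

section
/- Morphological untangling of the sum of a dilation and an erosion with shared weights: let x ∈ ℝ^d with ‖x‖₁ < C. Define y_i = (max(-C, x_i + C, max_{j≠i} x_j)) + (min(-C, x_i + C, min_{j≠i} x_j)). Then y_i = x_i for every i ∈ [d]. -/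
/-- Morphological untangling: for `‖x‖₁ < C`, the sum of the max-plus unit with bias `-C`,
weight `+C` on coordinate `i` and `0` elsewhere, and the min-plus unit with the same bias
and weights, equals `x i`. That is,
`(max(-C, x_i + C, max_{j≠i} x_j)) + (min(-C, x_i + C, min_{j≠i} x_j)) = x_i`. -/
theorem mpm_untangle (d : ℕ) (x : Fin d → ℝ) (C : ℝ) (h : ∑ j, |x j| < C) (i : Fin d) :
    max (-C) (Finset.univ.sup' ⟨i, Finset.mem_univ i⟩ fun j =>
        x j + if j = i then C else 0) +
      min (-C) (Finset.univ.inf' ⟨i, Finset.mem_univ i⟩ fun j =>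
        x j + if j = i then C else 0) = x i := by
  have habs : ∀ j, |x j| < C := fun j =>
    lt_of_le_of_lt (Finset.single_le_sum (fun k _ => abs_nonneg (x k)) (Finset.mem_univ j)) h
  have hC : 0 < C := lt_of_le_of_lt (abs_nonneg (x i)) (habs i)
  have hterm_le : ∀ j, x j + (if j = i then C else 0) ≤ x i + C := by
    intro j
    by_cases hj : j = i
    · simp [hj]
    · simp only [hj, if_false, add_zero]
      have hpair : |x i| + |x j| ≤ ∑ k, |x k| := by
        have : ∑ k ∈ ({i, j} : Finset (Fin d)), |x k| ≤ ∑ k, |x k| :=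
          Finset.sum_le_sum_of_subset_of_nonneg (Finset.subset_univ _)
            (fun k _ _ => abs_nonneg (x k))
        rwa [Finset.sum_pair (Ne.symm hj)] at this
      have h1 : x j ≤ |x j| := le_abs_self _
      have h2 : -x i ≤ |x i| := neg_le_abs _
      linarith
  have hterm_ge : ∀ j, -C ≤ x j + (if j = i then C else 0) := by
    intro j
    have h1 := (abs_lt.mp (habs j)).1
    by_cases hj : j = i
    · subst hj; simp; linarith
    · simp [hj]; linarith
  have hsup : (Finset.univ.sup' ⟨i, Finset.mem_univ i⟩ fun j =>
      x j + if j = i then C else 0) = x i + C := by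
    apply le_antisymm
    · exact Finset.sup'_le _ _ fun j _ => hterm_le j
    · have := Finset.le_sup' (fun j => x j + if j = i then C else 0) (Finset.mem_univ i)
      simpa using this
  have hinf : min (-C) (Finset.univ.inf' ⟨i, Finset.mem_univ i⟩ fun j =>
      x j + if j = i then C else 0) = -C := by
    apply min_eq_left
    exact Finset.le_inf' _ _ fun j _ => hterm_ge j
  have hmax : max (-C) (x i + C) = x i + C := by
    apply max_eq_right
    have := (abs_lt.mp (habs i)).1
    linarith
  rw [hsup, hmax, hinf]
  ring
end

section
/- ReLU via an MPM layer: let y ∈ ℝ^N with ‖y‖₁ < C. For each i define x_i = max(C, y_i + C, max_{j≠i} y_j) + min(-C, y_i + C, min_{j≠i} y_j). Then x_i = max(0, y_i) for every i. -/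
/-- ReLU via an MPM layer: for `‖y‖₁ < C`,
`max(C, y_i + C, max_{j≠i} y_j) + min(-C, y_i + C, min_{j≠i} y_j) = max(0, y_i)`. -/
theorem mpm_relu (N : ℕ) (y : Fin N → ℝ) (C : ℝ) (h : ∑ j, |y j| < C) (i : Fin N) :
    max C (Finset.univ.sup' ⟨i, Finset.mem_univ i⟩ fun j =>
        y j + if j = i then C else 0) +
      min (-C) (Finset.univ.inf' ⟨i, Finset.mem_univ i⟩ fun j =>
        y j + if j = i then C else 0) = max 0 (y i) := by
  have habs : ∀ j : Fin N, |y j| < C := fun j =>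
    lt_of_le_of_lt (Finset.single_le_sum (fun k _ => abs_nonneg (y k)) (Finset.mem_univ j)) h
  have hC : 0 < C := lt_of_le_of_lt (abs_nonneg _) (habs i)
  have hsup : Finset.univ.sup' ⟨i, Finset.mem_univ i⟩
      (fun j => y j + if j = i then C else 0) ≤ max C (y i + C) := by
    apply Finset.sup'_le
    intro j _
    by_cases hj : j = i
    · subst hj; simp
    · simp only [hj, if_false, add_zero]
      exact le_max_of_le_left (le_of_lt (lt_of_le_of_lt (le_abs_self _) (habs j)))
  have hsup2 : y i + C ≤ Finset.univ.sup' ⟨i, Finset.mem_univ i⟩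
      (fun j => y j + if j = i then C else 0) := by
    have := Finset.le_sup' (fun j => y j + if j = i then C else 0) (Finset.mem_univ i)
    simpa using this
  have hinf : -C ≤ Finset.univ.inf' ⟨i, Finset.mem_univ i⟩
      (fun j => y j + if j = i then C else 0) := by
    apply Finset.le_inf'
    intro j _
    by_cases hj : j = i
    · subst hj; simp only [if_true]
      nlinarith [abs_nonneg (y j), neg_abs_le (y j), habs j]
    · simp only [hj, if_false, add_zero]
      linarith [neg_abs_le (y j), habs j]
  have h1 : max C (Finset.univ.sup' ⟨i, Finset.mem_univ i⟩
      (fun j => y j + if j = i then C else 0)) = max C (y i + C) := by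
    apply le_antisymm
    · exact max_le (le_max_left _ _) hsup
    · exact max_le (le_max_left _ _) (le_max_of_le_right hsup2)
  have h2 : min (-C) (Finset.univ.inf' ⟨i, Finset.mem_univ i⟩
      (fun j => y j + if j = i then C else 0)) = -C := min_eq_left hinf
  rw [h1, h2]
  rcases le_total (y i) 0 with hy | hy
  · rw [max_eq_left (by linarith), max_eq_left hy]; ring
  · rw [max_eq_right (by linarith), max_eq_right hy]; ring
end
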